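/- In any Gallai-coloring of a complete graph on at least two vertices, there is a connected monochromatic spanning subgraph; that is, there exists a color i such that the graph on the full vertex set whose edges are exactly the edges colored i is connected. -/

import Mathlib

open Finset

/-- A Gallai coloring: a symmetric edge-coloring of the complete graph on `V`
with no rainbow triangle. -/
def IsGallai {V β : Type*} (c : V → V → β) : Prop :=
  (∀ a b, c a b = c b a) ∧
  ∀ a b d : V, a ≠ b → a ≠ d → b ≠ d →
    ¬(c a b ≠ c a d ∧ c a b ≠ c b d ∧ c a d ≠ c b d)

/-- The set of colors appearing on edges inside the vertex set `S`. -/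
def colorsOn {V β : Type*} [DecidableEq V] [DecidableEq β]
    (c : V → V → β) (S : Finset V) : Finset β :=
  ((S ×ˢ S).filter fun p => p.1 ≠ p.2).image fun p => c p.1 p.2

/-- `gallaiNum k q p` is the smallest positive `n` such that every Gallai-`k`-coloring
of `K_n` contains a set of `p` vertices whose induced edges use at most `q` colors. -/
noncomputable def gallaiNum (k q p : ℕ) : ℕ :=
  sInf {n : ℕ | 0 < n ∧ ∀ c : Fin n → Fin n → Fin k, IsGallai c →
    ∃ S : Finset (Fin n), S.card = p ∧ (colorsOn c S).card ≤ q}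

/-- edge relation of color `i` inside `S` -/
def gR {V β : Type*} (c : V → V → β) (i : β) (S : Finset V) (a b : V) : Prop :=
  a ∈ S ∧ b ∈ S ∧ a ≠ b ∧ c a b = i

lemma gR_symm {V β : Type*} {c : V → V → β} (hc : ∀ a b, c a b = c b a)
    {i : β} {S : Finset V} : Symmetric (gR c i S) := by
  rintro a b ⟨ha, hb, hab, hci⟩
  exact ⟨hb, ha, hab.symm, (hc b a).trans hci⟩

lemma gallai_key {V β : Type*} [DecidableEq V] (c : V → V → β) (h : IsGallai c) :
    ∀ S : Finset V, S.Nonempty →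
      ∃ i, ∀ u ∈ S, ∀ w ∈ S, Relation.ReflTransGen (gR c i S) u w := by
  intro S
  induction S using Finset.strongInduction with
  | _ S ih =>
  intro hS
  obtain ⟨v, hv⟩ := hS
  set S' := S.erase v with hS'def
  have hsub : S' ⊆ S := Finset.erase_subset _ _
  by_cases hS' : S'.Nonempty
  · obtain ⟨i, hi⟩ := ih S' (Finset.erase_ssubset hv) hS'
    by_cases hcase : ∃ u ∈ S', c v u = i
    · -- v has an i-edge into S'
      obtain ⟨u, hu, hcu⟩ := hcase
      refine ⟨i, ?_⟩
      have hreach : ∀ w ∈ S, Relation.ReflTransGen (gR c i S) v w := by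
        intro w hw
        rcases eq_or_ne w v with rfl | hwv
        · exact Relation.ReflTransGen.refl
        · have hw' : w ∈ S' := Finset.mem_erase.2 ⟨hwv, hw⟩
          have step : gR c i S v u :=
            ⟨hv, hsub hu, (Finset.ne_of_mem_erase hu).symm, hcu⟩
          exact (Relation.ReflTransGen.single step).trans
            (Relation.ReflTransGen.mono (r := gR c i S') (p := gR c i S) (fun a b (hab : gR c i S' a b) => ⟨hsub hab.1, hsub hab.2.1, hab.2.2⟩) _ _ (hi u hu w hw'))
      intro u' hu' w' hw'
      exact ((@Relation.ReflTransGen.stdSymm _ _ ⟨fun _ _ hab => gR_symm h.1 hab⟩).symm _ _ (hreach u' hu')).trans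
        (hreach w' hw')
    · push_neg at hcase
      -- c v · is constant along i-paths in S'
      have hconst : ∀ a b, Relation.ReflTransGen (gR c i S') a b → c v a = c v b := by
        intro a b hab
        induction hab with
        | refl => rfl
        | tail _ hstep ihh =>
          rename_i x y _
          obtain ⟨hx, hy, hxy, hcxy⟩ := hstep
          have hvx : v ≠ x := (Finset.ne_of_mem_erase hx).symm
          have hvy : v ≠ y := (Finset.ne_of_mem_erase hy).symm
          have := h.2 v x y hvx hvy hxy
          by_contra hne
          exact this ⟨fun e => hne (ihh.trans e),
            fun e => hcase x hx (e.trans hcxy),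
            fun e => hcase y hy (e.trans hcxy)⟩
      obtain ⟨u0, hu0⟩ := hS'
      refine ⟨c v u0, ?_⟩
      have hall : ∀ w ∈ S', c v w = c v u0 := fun w hw =>
        hconst w u0 ((@Relation.ReflTransGen.stdSymm _ _ ⟨fun _ _ hab => gR_symm h.1 hab⟩).symm _ _
          (hi u0 hu0 w hw))
      have hreach : ∀ w ∈ S, Relation.ReflTransGen (gR c (c v u0) S) v w := by
        intro w hw
        rcases eq_or_ne w v with rfl | hwv
        · exact Relation.ReflTransGen.refl
        · have hw' : w ∈ S' := Finset.mem_erase.2 ⟨hwv, hw⟩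
          exact Relation.ReflTransGen.single
            ⟨hv, hw, hwv.symm, hall w hw'⟩
      intro u' hu' w' hw'
      exact ((@Relation.ReflTransGen.stdSymm _ _ ⟨fun _ _ hab => gR_symm h.1 hab⟩).symm _ _ (hreach u' hu')).trans
        (hreach w' hw')
  · -- S = {v}
    refine ⟨c v v, ?_⟩
    intro u hu w hw
    have : ∀ x ∈ S, x = v := by
      intro x hx
      by_contra hx'
      exact hS' ⟨x, Finset.mem_erase.2 ⟨hx', hx⟩⟩
    rw [this u hu, this w hw]

theorem gallai_connected_monochromatic (n : ℕ) (hn : 2 ≤ n) (β : Type)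
    (c : Fin n → Fin n → β) (h : IsGallai c) :
    ∃ i : β, (SimpleGraph.fromRel fun a b => c a b = i).Connected := by
  have hpos : 0 < n := by omega
  haveI : NeZero n := ⟨by omega⟩
  obtain ⟨i, hi⟩ := gallai_key c h Finset.univ ⟨0, Finset.mem_univ _⟩
  refine ⟨i, ?_⟩
  rw [SimpleGraph.connected_iff]
  refine ⟨?_, ⟨0⟩⟩
  · intro u w
    have := hi u (Finset.mem_univ _) w (Finset.mem_univ _)
    induction this with
    | refl => exact SimpleGraph.Reachable.refl _
    | tail _ hstep ihh =>
      exact ihh.trans (SimpleGraph.Adj.reachable ⟨hstep.2.2.1, Or.inl hstep.2.2.2⟩)
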